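/- arXiv:1007.0743 — 2 statements merged into one kernel-verified Lean document; each statement's English description precedes it below -/
import Mathlib

section
/- Fractional integration by parts for the right Caputo derivative: for f absolutely continuous on [a,b], g continuous (with {}_aD_x^α g existing and integrable), and 0 < α < 1, one has ∫_a^b g(x)·({}^C_xD_b^α f)(x) dx = −[f(x)·({}_aI_x^{1−α} g)(x)]_{x=a}^{x=b} + ∫_a^b f(x)·({}_aD_x^α g)(x) dx. -/
open MeasureTheory Real Set Filter intervalIntegral
open scoped Topology

/-- Left Riemann–Liouville fractional integral of order `μ`. -/
noncomputable def leftRLI (a μ : ℝ) (f : ℝ → ℝ) (x : ℝ) : ℝ :=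
  (1 / Real.Gamma μ) * ∫ t in a..x, (x - t) ^ (μ - 1) * f t

/-- Right Riemann–Liouville fractional integral of order `μ`. -/
noncomputable def rightRLI (b μ : ℝ) (f : ℝ → ℝ) (x : ℝ) : ℝ :=
  (1 / Real.Gamma μ) * ∫ t in x..b, (t - x) ^ (μ - 1) * f t

/-- Left Riemann–Liouville fractional derivative of order `α`. -/
noncomputable def leftRLD (a α : ℝ) (f : ℝ → ℝ) (x : ℝ) : ℝ :=
  deriv (leftRLI a (1 - α) f) x

/-- Right Riemann–Liouville fractional derivative of order `α`. -/
noncomputable def rightRLD (b α : ℝ) (f : ℝ → ℝ) (x : ℝ) : ℝ :=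
  - deriv (rightRLI b (1 - α) f) x

/-- Left Caputo fractional derivative of order `α`. -/
noncomputable def leftCaputo (a α : ℝ) (f : ℝ → ℝ) (x : ℝ) : ℝ :=
  (1 / Real.Gamma (1 - α)) * ∫ t in a..x, (x - t) ^ (-α) * deriv f t

/-- Right Caputo fractional derivative of order `α`. -/
noncomputable def rightCaputo (b α : ℝ) (f : ℝ → ℝ) (x : ℝ) : ℝ :=
  (-1 / Real.Gamma (1 - α)) * ∫ t in x..b, (t - x) ^ (-α) * deriv f t

/-- Combined Caputo derivative `{}^CD^{α,β}_γ`. -/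
noncomputable def combC (a b α β γ : ℝ) (f : ℝ → ℝ) (x : ℝ) : ℝ :=
  γ * leftCaputo a α f x + (1 - γ) * rightCaputo b β f x

/-- Combined Riemann–Liouville derivative `D^{β,α}_{1-γ}`. -/
noncomputable def combRL (a b α β γ : ℝ) (g : ℝ → ℝ) (x : ℝ) : ℝ :=
  (1 - γ) * leftRLD a β g x + γ * rightRLD b α g x

section Aux

private lemma rpow_subadd {u v p : ℝ} (hu : 0 ≤ u) (hv : 0 ≤ v) (hp : 0 ≤ p) (hp1 : p ≤ 1) :
    (u + v) ^ p ≤ u ^ p + v ^ p := by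
  have h := NNReal.rpow_add_le_add_rpow u.toNNReal v.toNNReal hp hp1
  rw [← Real.toNNReal_add hu hv] at h
  have h2 := (NNReal.coe_le_coe).2 h
  rwa [NNReal.coe_rpow, NNReal.coe_add, NNReal.coe_rpow, NNReal.coe_rpow,
    Real.coe_toNNReal _ (by positivity), Real.coe_toNNReal _ hu, Real.coe_toNNReal _ hv] at h2

private lemma kerIntg {α : ℝ} (hα1 : α < 1) (c u v : ℝ) :
    IntervalIntegrable (fun t => (c - t) ^ (-α)) volume u v := by
  have h2 := (intervalIntegrable_rpow' (a := c - u) (b := c - v) (r := -α)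
    (by linarith)).comp_sub_left c
  simpa using h2

private lemma kerVal {α : ℝ} (hα1 : α < 1) (c u v : ℝ) :
    ∫ t in u..v, (c - t) ^ (-α) = ((c - u) ^ (1 - α) - (c - v) ^ (1 - α)) / (1 - α) := by
  rw [show (fun t => (c - t) ^ (-α)) = fun t => (fun s : ℝ => s ^ (-α)) (c - t) from rfl]
  rw [intervalIntegral.integral_comp_sub_left (fun s : ℝ => s ^ (-α)) c,
    integral_rpow (Or.inl (by linarith)), show -α + 1 = 1 - α by ring]

private lemma holderEst {α a M : ℝ} (hα0 : 0 < α) (hα1 : α < 1) {g : ℝ → ℝ}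
    (hgc : Continuous g) (hM : ∀ x, |g x| ≤ M) {x y : ℝ} (hax : a ≤ x) (hxy : x ≤ y) :
    |(∫ t in a..y, (y - t) ^ (-α) * g t) - ∫ t in a..x, (x - t) ^ (-α) * g t|
      ≤ 2 * M / (1 - α) * (y - x) ^ (1 - α) := by
  have hM0 : 0 ≤ M := le_trans (abs_nonneg _) (hM 0)
  have h1α : 0 < 1 - α := by linarith
  have i1 : IntervalIntegrable (fun t => (y - t) ^ (-α) * g t) volume a x :=
    (kerIntg hα1 y a x).mul_continuousOn hgc.continuousOn
  have i2 : IntervalIntegrable (fun t => (y - t) ^ (-α) * g t) volume x y :=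
    (kerIntg hα1 y x y).mul_continuousOn hgc.continuousOn
  have i3 : IntervalIntegrable (fun t => (x - t) ^ (-α) * g t) volume a x :=
    (kerIntg hα1 x a x).mul_continuousOn hgc.continuousOn
  have hsplit : (∫ t in a..y, (y - t) ^ (-α) * g t)
      = (∫ t in a..x, (y - t) ^ (-α) * g t) + ∫ t in x..y, (y - t) ^ (-α) * g t :=
    (integral_add_adjacent_intervals i1 i2).symm
  have e1 : (∫ t in a..x, (y - t) ^ (-α) * g t) - (∫ t in a..x, (x - t) ^ (-α) * g t)
      = ∫ t in a..x, ((y - t) ^ (-α) * g t - (x - t) ^ (-α) * g t) :=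
    (intervalIntegral.integral_sub i1 i3).symm
  have hxnull : ∀ᵐ t ∂(volume.restrict (uIoc a x)), t ≠ x := by
    refine ae_iff.mpr ?_
    have hs : {t : ℝ | ¬ t ≠ x} = {x} := by ext t; simp
    rw [hs, Measure.restrict_apply (measurableSet_singleton x)]
    exact measure_mono_null inter_subset_left Real.volume_singleton
  -- first piece
  have b1 : ‖∫ t in a..x, ((y - t) ^ (-α) * g t - (x - t) ^ (-α) * g t)‖
      ≤ |∫ t in a..x, ((x - t) ^ (-α) - (y - t) ^ (-α)) * M| := by
    refine intervalIntegral.norm_integral_le_abs_of_norm_le ?_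
      (((kerIntg hα1 x a x).sub (kerIntg hα1 y a x)).mul_const M)
    filter_upwards [ae_restrict_mem measurableSet_uIoc, hxnull] with t ht htx
    rw [uIoc_of_le hax] at ht
    have htx' : t < x := lt_of_le_of_ne ht.2 htx
    have h0 : (0:ℝ) < x - t := by linarith
    have hk : (y - t) ^ (-α) ≤ (x - t) ^ (-α) :=
      Real.rpow_le_rpow_of_nonpos h0 (by linarith) (by linarith)
    have hrw : (y - t) ^ (-α) * g t - (x - t) ^ (-α) * g t
        = ((y - t) ^ (-α) - (x - t) ^ (-α)) * g t := by ring
    rw [hrw, Real.norm_eq_abs, abs_mul,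
      abs_of_nonpos (by linarith : (y - t) ^ (-α) - (x - t) ^ (-α) ≤ 0)]
    nlinarith [hM t, abs_nonneg (g t), sub_nonneg.mpr hk]
  have v1 : ∫ t in a..x, ((x - t) ^ (-α) - (y - t) ^ (-α)) * M
      = ((x - a) ^ (1 - α) - ((y - a) ^ (1 - α) - (y - x) ^ (1 - α))) / (1 - α) * M := by
    rw [intervalIntegral.integral_mul_const,
      intervalIntegral.integral_sub (kerIntg hα1 x a x) (kerIntg hα1 y a x),
      kerVal hα1, kerVal hα1, sub_self, Real.zero_rpow (ne_of_gt h1α)]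
    ring
  have hnum_ub : (x - a) ^ (1 - α) - ((y - a) ^ (1 - α) - (y - x) ^ (1 - α))
      ≤ (y - x) ^ (1 - α) := by
    have h := Real.rpow_le_rpow (by linarith : (0:ℝ) ≤ x - a) (by linarith : x - a ≤ y - a) h1α.le
    linarith
  have hnum_lb : 0 ≤ (x - a) ^ (1 - α) - ((y - a) ^ (1 - α) - (y - x) ^ (1 - α)) := by
    have h : (y - a) ^ (1 - α) ≤ (x - a) ^ (1 - α) + (y - x) ^ (1 - α) := by
      rw [show y - a = (x - a) + (y - x) by ring]
      exact rpow_subadd (by linarith) (by linarith) h1α.le (by linarith)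
    linarith
  have b1' : ‖∫ t in a..x, ((y - t) ^ (-α) * g t - (x - t) ^ (-α) * g t)‖
      ≤ (y - x) ^ (1 - α) / (1 - α) * M := by
    refine b1.trans ?_
    rw [v1, abs_of_nonneg (mul_nonneg (div_nonneg hnum_lb h1α.le) hM0)]
    gcongr
  -- second piece
  have b2 : ‖∫ t in x..y, (y - t) ^ (-α) * g t‖ ≤ |∫ t in x..y, (y - t) ^ (-α) * M| := by
    refine intervalIntegral.norm_integral_le_abs_of_norm_le ?_ ((kerIntg hα1 y x y).mul_const M)
    filter_upwards [ae_restrict_mem measurableSet_uIoc] with t ht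
    rw [uIoc_of_le hxy] at ht
    have h0 : (0:ℝ) ≤ y - t := by linarith [ht.2]
    rw [Real.norm_eq_abs, abs_mul, abs_of_nonneg (Real.rpow_nonneg h0 _)]
    exact mul_le_mul_of_nonneg_left (hM t) (Real.rpow_nonneg h0 _)
  have v2 : ∫ t in x..y, (y - t) ^ (-α) * M = (y - x) ^ (1 - α) / (1 - α) * M := by
    rw [intervalIntegral.integral_mul_const, kerVal hα1, sub_self,
      Real.zero_rpow (ne_of_gt h1α)]
    ring
  have b2' : ‖∫ t in x..y, (y - t) ^ (-α) * g t‖ ≤ (y - x) ^ (1 - α) / (1 - α) * M := by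
    refine b2.trans ?_
    rw [v2, abs_of_nonneg (mul_nonneg (div_nonneg (Real.rpow_nonneg (by linarith) _) h1α.le) hM0)]
  have hD : (∫ t in a..y, (y - t) ^ (-α) * g t) - ∫ t in a..x, (x - t) ^ (-α) * g t
      = (∫ t in a..x, ((y - t) ^ (-α) * g t - (x - t) ^ (-α) * g t))
        + ∫ t in x..y, (y - t) ^ (-α) * g t := by
    rw [← e1, hsplit]; ring
  rw [hD]
  calc |(∫ t in a..x, ((y - t) ^ (-α) * g t - (x - t) ^ (-α) * g t))
        + ∫ t in x..y, (y - t) ^ (-α) * g t|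
      ≤ |∫ t in a..x, ((y - t) ^ (-α) * g t - (x - t) ^ (-α) * g t)|
        + |∫ t in x..y, (y - t) ^ (-α) * g t| := abs_add_le _ _
    _ ≤ (y - x) ^ (1 - α) / (1 - α) * M + (y - x) ^ (1 - α) / (1 - α) * M := by
        have hb1 := b1'
        have hb2 := b2'
        rw [Real.norm_eq_abs] at hb1 hb2
        exact add_le_add hb1 hb2
    _ = 2 * M / (1 - α) * (y - x) ^ (1 - α) := by ring

private lemma contRLI {α a M : ℝ} (hα0 : 0 < α) (hα1 : α < 1) {g : ℝ → ℝ}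
    (hgc : Continuous g) (hM : ∀ x, |g x| ≤ M) :
    ContinuousOn (fun x => ∫ t in a..x, (x - t) ^ (-α) * g t) (Ici a) := by
  have h1α : 0 < 1 - α := by linarith
  set P : ℝ → ℝ := fun x => ∫ t in a..x, (x - t) ^ (-α) * g t with hP
  have key : ∀ x ∈ Ici a, ∀ z ∈ Ici a, |P z - P x| ≤ 2 * M / (1 - α) * |z - x| ^ (1 - α) := by
    intro x hx z hz
    rcases le_total x z with h | h
    · rw [abs_of_nonneg (by linarith : (0:ℝ) ≤ z - x)]
      exact holderEst hα0 hα1 hgc hM hx h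
    · rw [abs_sub_comm, abs_of_nonpos (by linarith : z - x ≤ 0), neg_sub]
      exact holderEst hα0 hα1 hgc hM hz h
  intro x hx
  have hb : Tendsto (fun z : ℝ => 2 * M / (1 - α) * |z - x| ^ (1 - α)) (𝓝[Ici a] x) (𝓝 0) := by
    have h1 : Tendsto (fun z : ℝ => |z - x|) (𝓝[Ici a] x) (𝓝 0) := by
      have hc : Continuous (fun z : ℝ => |z - x|) :=
        (continuous_id.sub continuous_const).abs
      have h := hc.tendsto x
      simp only [sub_self, abs_zero] at h
      exact h.mono_left nhdsWithin_le_nhds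
    have h2 : Tendsto (fun u : ℝ => u ^ (1 - α)) (𝓝 0) (𝓝 0) := by
      have h := (Real.continuousAt_rpow_const 0 (1 - α) (Or.inr h1α.le)).tendsto
      rwa [Real.zero_rpow (ne_of_gt h1α)] at h
    have h3 := (h2.comp h1).const_mul (2 * M / (1 - α))
    simpa using h3
  have hsq : Tendsto (fun z => dist (P z) (P x)) (𝓝[Ici a] x) (𝓝 0) :=
    squeeze_zero' (Eventually.of_forall fun z => dist_nonneg)
      (eventually_mem_nhdsWithin.mono fun z hz => by
        rw [Real.dist_eq]; exact key x hx z hz) hb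
  exact (tendsto_iff_dist_tendsto_zero).mpr hsq

end Aux

set_option maxHeartbeats 2000000 in
/-- fractional integration by parts for the right Caputo derivative. -/
theorem caputo_right_integration_by_parts (a b α : ℝ) (hab : a < b)
    (hα : α ∈ Set.Ioo (0:ℝ) 1) (f g : ℝ → ℝ)
    (hf : ∀ x ∈ Set.Icc a b, DifferentiableAt ℝ f x)
    (hf' : IntervalIntegrable (deriv f) MeasureTheory.volume a b)
    (hg : ContinuousOn g (Set.Icc a b))
    (hgD : ∀ x ∈ Set.Ioo a b, DifferentiableAt ℝ (leftRLI a (1 - α) g) x)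
    (hgDi : IntervalIntegrable (leftRLD a α g) MeasureTheory.volume a b)
    (hint : IntervalIntegrable (fun x => g x * rightCaputo b α f x)
      MeasureTheory.volume a b) :
    ∫ x in a..b, g x * rightCaputo b α f x
      = -(f b * leftRLI a (1 - α) g b - f a * leftRLI a (1 - α) g a)
        + ∫ x in a..b, f x * leftRLD a α g x := by
  obtain ⟨hα0, hα1⟩ := hα
  have hab' : a ≤ b := hab.le
  have h1α : 0 < 1 - α := by linarith
  have hΓ : 0 < Real.Gamma (1 - α) := Real.Gamma_pos_of_pos h1α
  -- clamped version of g
  set q : ℝ → ℝ := fun x => g (max a (min x b)) with hq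
  have hclamp : ∀ x : ℝ, max a (min x b) ∈ Icc a b :=
    fun x => ⟨le_max_left _ _, max_le hab' (min_le_right _ _)⟩
  have hqc : Continuous q := by
    rw [hq]
    exact hg.comp_continuous (continuous_const.max (continuous_id.min continuous_const)) hclamp
  have hqeq : ∀ x ∈ Icc a b, q x = g x := by
    intro x hx
    simp only [hq]
    rw [min_eq_left hx.2, max_eq_right hx.1]
  obtain ⟨M0, hM0⟩ := IsCompact.exists_bound_of_continuousOn isCompact_Icc hg
  have hM : ∀ x, |q x| ≤ M0 := by
    intro x
    simp only [hq]
    rw [← Real.norm_eq_abs]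
    exact hM0 _ (hclamp x)
  have hMnn : 0 ≤ M0 := le_trans (abs_nonneg _) (hM 0)
  -- continuity of the fractional integral
  set P : ℝ → ℝ := fun x => ∫ t in a..x, (x - t) ^ (-α) * q t with hP
  have hPcont : ContinuousOn P (Icc a b) := by
    rw [hP]
    exact (contRLI hα0 hα1 hqc hM).mono Icc_subset_Ici_self
  have hGP : ∀ t ∈ Icc a b, Real.Gamma (1 - α) * leftRLI a (1 - α) g t = P t := by
    intro t ht
    simp only [hP, leftRLI]
    rw [← mul_assoc, mul_one_div, div_self (ne_of_gt hΓ), one_mul]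
    refine intervalIntegral.integral_congr fun s hs => ?_
    rw [uIcc_of_le ht.1] at hs
    show (t - s) ^ (1 - α - 1) * g s = (t - s) ^ (-α) * q s
    rw [show (1:ℝ) - α - 1 = -α by ring, hqeq s ⟨hs.1, hs.2.trans ht.2⟩]
  have hGcont : ContinuousOn (leftRLI a (1 - α) g) (Icc a b) := by
    refine ContinuousOn.congr (f := fun t => (1 / Real.Gamma (1 - α)) * P t)
      (continuousOn_const.mul hPcont) ?_
    intro t ht
    show leftRLI a (1 - α) g t = 1 / Real.Gamma (1 - α) * P t
    rw [← hGP t ht]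
    field_simp
  -- the kernel function on the product space
  set Φ : ℝ × ℝ → ℝ :=
    fun p => ({r : ℝ × ℝ | r.1 < r.2}).indicator
      (fun r => (r.2 - r.1) ^ (-α) * deriv f r.2 * q r.1) p with hΦ
  have hΦval : ∀ x t : ℝ, Φ (x, t) = if x < t then (t - x) ^ (-α) * deriv f t * q x else 0 := by
    intro x t
    simp only [hΦ, Set.indicator_apply, Set.mem_setOf_eq]
  have hΦm : Measurable Φ := by
    refine Measurable.indicator ?_ (measurableSet_lt measurable_fst measurable_snd)
    refine (Measurable.mul (Measurable.mul ?_ ((measurable_deriv f).comp measurable_snd))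
      (hqc.measurable.comp measurable_fst))
    fun_prop
  have hrep : ∀ t : ℝ, (fun x => Φ (x, t))
      = (Iio t).indicator (fun x => (t - x) ^ (-α) * deriv f t * q x) := by
    intro t
    funext x
    rw [hΦval]
    simp [Set.indicator_apply]
  have hrepR : ∀ x : ℝ, (fun t => Φ (x, t))
      = (Ioi x).indicator (fun t => (t - x) ^ (-α) * deriv f t * q x) := by
    intro x
    funext t
    rw [hΦval]
    simp [Set.indicator_apply]
  -- integrability in x for each fixed t
  have hker : ∀ t : ℝ, Integrable (fun x => Φ (x, t)) (volume.restrict (Ioc a b)) := by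
    intro t
    rw [hrep t, integrable_indicator_iff measurableSet_Iio, MeasureTheory.IntegrableOn,
      Measure.restrict_restrict measurableSet_Iio]
    have hsub : Iio t ∩ Ioc a b ⊆ Ioo a t := fun x hx => ⟨hx.2.1, hx.1⟩
    have hIT : IntegrableOn (fun x => (t - x) ^ (-α) * deriv f t * q x) (Ioo a t) volume := by
      rcases le_total a t with h | h
      · have hi := ((kerIntg hα1 t a t).mul_const (deriv f t)).mul_continuousOn hqc.continuousOn
        exact hi.1.mono_set Ioo_subset_Ioc_self
      · rw [Set.Ioo_eq_empty (fun hlt => absurd h (not_le.mpr hlt))]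
        exact integrableOn_empty
    exact hIT.mono_set hsub
  -- integrability on the product
  have hΦint : Integrable Φ ((volume.restrict (Ioc a b)).prod (volume.restrict (Ioc a b))) := by
    rw [integrable_prod_iff' hΦm.aestronglyMeasurable]
    constructor
    · exact Eventually.of_forall fun t => hker t
    · refine Integrable.mono'
        (g := fun t => ‖deriv f t‖ * (M0 * ((b - a) ^ (1 - α) / (1 - α))))
        (hf'.1.norm.mul_const _)
        ((hΦm.norm.stronglyMeasurable.integral_prod_left').aestronglyMeasurable) ?_
      filter_upwards [ae_restrict_mem measurableSet_Ioc] with t ht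
      have hbound : ∀ᵐ x ∂(volume.restrict (Ioc a b)), ‖Φ (x, t)‖
          ≤ ((Ioo a t).indicator (fun x => (t - x) ^ (-α) * (‖deriv f t‖ * M0))) x := by
        filter_upwards [ae_restrict_mem measurableSet_Ioc] with x hx
        by_cases h : x < t
        · rw [hΦval, if_pos h, Set.indicator_of_mem (show x ∈ Ioo a t from ⟨hx.1, h⟩)]
          rw [Real.norm_eq_abs, abs_mul, abs_mul,
            abs_of_nonneg (Real.rpow_nonneg (by linarith) _), mul_assoc]
          refine mul_le_mul_of_nonneg_left ?_ (Real.rpow_nonneg (by linarith) _)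
          rw [Real.norm_eq_abs]
          exact mul_le_mul_of_nonneg_left (hM x) (abs_nonneg _)
        · rw [hΦval, if_neg h, Set.indicator_of_notMem (fun hmem => h hmem.2)]
          simp
      have hDint : Integrable
          ((Ioo a t).indicator (fun x => (t - x) ^ (-α) * (‖deriv f t‖ * M0)))
          (volume.restrict (Ioc a b)) := by
        rw [integrable_indicator_iff measurableSet_Ioo, MeasureTheory.IntegrableOn,
          Measure.restrict_restrict measurableSet_Ioo]
        refine IntegrableOn.mono_set ?_ inter_subset_left
        exact ((kerIntg hα1 t a t).mul_const (‖deriv f t‖ * M0)).1.mono_set Ioo_subset_Ioc_self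
      have hle : ∫ x, ‖Φ (x, t)‖ ∂(volume.restrict (Ioc a b))
          ≤ ∫ x, ((Ioo a t).indicator (fun x => (t - x) ^ (-α) * (‖deriv f t‖ * M0))) x
              ∂(volume.restrict (Ioc a b)) :=
        integral_mono_of_nonneg (Eventually.of_forall fun x => norm_nonneg _) hDint hbound
      have hval : ∫ x, ((Ioo a t).indicator (fun x => (t - x) ^ (-α) * (‖deriv f t‖ * M0))) x
            ∂(volume.restrict (Ioc a b))
          = (t - a) ^ (1 - α) / (1 - α) * (‖deriv f t‖ * M0) := by
        rw [MeasureTheory.integral_indicator measurableSet_Ioo, Measure.restrict_restrict measurableSet_Ioo,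
          Set.inter_eq_self_of_subset_left
            (show Ioo a t ⊆ Ioc a b from fun x hx => ⟨hx.1, hx.2.le.trans ht.2⟩),
          ← integral_Ioc_eq_integral_Ioo, ← intervalIntegral.integral_of_le ht.1.le,
          intervalIntegral.integral_mul_const, kerVal hα1, sub_self,
          Real.zero_rpow (ne_of_gt h1α), sub_zero]
      calc ‖∫ x, ‖Φ (x, t)‖ ∂(volume.restrict (Ioc a b))‖
          = ∫ x, ‖Φ (x, t)‖ ∂(volume.restrict (Ioc a b)) :=
            Real.norm_of_nonneg (integral_nonneg fun x => norm_nonneg _)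
        _ ≤ (t - a) ^ (1 - α) / (1 - α) * (‖deriv f t‖ * M0) := hval ▸ hle
        _ ≤ (b - a) ^ (1 - α) / (1 - α) * (‖deriv f t‖ * M0) := by
            have hr : (t - a) ^ (1 - α) ≤ (b - a) ^ (1 - α) :=
              Real.rpow_le_rpow (by linarith [ht.1.le]) (by linarith [ht.2]) h1α.le
            have hnn : 0 ≤ ‖deriv f t‖ * M0 := mul_nonneg (norm_nonneg _) hMnn
            exact mul_le_mul_of_nonneg_right (by gcongr) hnn
        _ = ‖deriv f t‖ * (M0 * ((b - a) ^ (1 - α) / (1 - α))) := by ring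
  -- Fubini
  have hswap : (∫ x in Ioc a b, ∫ t in Ioc a b, Φ (x, t))
      = ∫ t in Ioc a b, ∫ x in Ioc a b, Φ (x, t) :=
    integral_integral_swap (f := fun x t => Φ (x, t)) hΦint
  -- left-hand side computation
  have hL : ∫ x in a..b, g x * rightCaputo b α f x
      = (-1 / Real.Gamma (1 - α)) * ∫ x in Ioc a b, ∫ t in Ioc a b, Φ (x, t) := by
    rw [intervalIntegral.integral_of_le hab', ← MeasureTheory.integral_const_mul]
    refine setIntegral_congr_fun measurableSet_Ioc fun x hx => ?_
    have e1 : ∫ t in Ioc a b, Φ (x, t)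
        = ∫ t in Ioc x b, (t - x) ^ (-α) * deriv f t * q x := by
      rw [hrepR x, MeasureTheory.integral_indicator measurableSet_Ioi,
        Measure.restrict_restrict measurableSet_Ioi,
        show Ioi x ∩ Ioc a b = Ioc x b from Set.ext fun t => by
          simp only [mem_inter_iff, mem_Ioi, mem_Ioc]
          exact ⟨fun h => ⟨h.1, h.2.2⟩, fun h => ⟨h.1, hx.1.trans h.1, h.2⟩⟩]
    have e2 : ∫ t in Ioc x b, (t - x) ^ (-α) * deriv f t * q x
        = (∫ t in x..b, (t - x) ^ (-α) * deriv f t) * g x := by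
      rw [← intervalIntegral.integral_of_le hx.2, intervalIntegral.integral_mul_const,
        hqeq x ⟨hx.1.le, hx.2⟩]
    rw [e1, e2]
    simp only [rightCaputo]
    ring
  -- right-hand side computation
  have hR : (∫ t in Ioc a b, ∫ x in Ioc a b, Φ (x, t))
      = Real.Gamma (1 - α) * ∫ t in Ioc a b, deriv f t * leftRLI a (1 - α) g t := by
    rw [← MeasureTheory.integral_const_mul]
    refine setIntegral_congr_fun measurableSet_Ioc fun t ht => ?_
    have e1 : ∫ x in Ioc a b, Φ (x, t)
        = ∫ x in Ioo a t, (t - x) ^ (-α) * deriv f t * q x := by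
      rw [hrep t, MeasureTheory.integral_indicator measurableSet_Iio,
        Measure.restrict_restrict measurableSet_Iio,
        show Iio t ∩ Ioc a b = Ioo a t from Set.ext fun x => by
          simp only [mem_inter_iff, mem_Iio, mem_Ioc, mem_Ioo]
          exact ⟨fun h => ⟨h.2.1, h.1⟩, fun h => ⟨h.2, h.1, h.2.le.trans ht.2⟩⟩]
    have e2 : ∫ x in Ioo a t, (t - x) ^ (-α) * deriv f t * q x = deriv f t * P t := by
      rw [← integral_Ioc_eq_integral_Ioo, ← intervalIntegral.integral_of_le ht.1.le,
        show (fun x => (t - x) ^ (-α) * deriv f t * q x)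
          = fun x => deriv f t * ((t - x) ^ (-α) * q x) from funext fun x => by ring,
        intervalIntegral.integral_const_mul]
    rw [e1, e2, ← hGP t ⟨ht.1.le, ht.2⟩]
    ring
  -- integration by parts
  have hfc : ContinuousOn f (Icc a b) := fun x hx => (hf x hx).continuousAt.continuousWithinAt
  have hint1 : IntervalIntegrable (fun x => deriv f x * leftRLI a (1 - α) g x) volume a b :=
    hf'.mul_continuousOn (by rw [uIcc_of_le hab']; exact hGcont)
  have hint2 : IntervalIntegrable (fun x => f x * leftRLD a α g x) volume a b :=
    hgDi.continuousOn_mul (by rw [uIcc_of_le hab']; exact hfc)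
  have hparts : (∫ y in a..b, (deriv f y * leftRLI a (1 - α) g y + f y * leftRLD a α g y))
      = f b * leftRLI a (1 - α) g b - f a * leftRLI a (1 - α) g a := by
    have h := integral_eq_sub_of_hasDeriv_right_of_le hab'
      (hcont := hfc.mul hGcont)
      (hderiv := fun x hx =>
        (((hf x (Ioo_subset_Icc_self hx)).hasDerivAt.mul
          (hgD x hx).hasDerivAt).hasDerivWithinAt))
      (f'int := hint1.add hint2)
    simpa [leftRLD] using h
  rw [intervalIntegral.integral_add hint1 hint2] at hparts
  have hLHS : ∫ x in a..b, g x * rightCaputo b α f x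
      = - ∫ x in a..b, deriv f x * leftRLI a (1 - α) g x := by
    rw [hL, hswap, hR, ← mul_assoc]
    rw [div_mul_cancel₀ (-1 : ℝ) (ne_of_gt hΓ)]
    rw [neg_one_mul, ← intervalIntegral.integral_of_le hab']
  rw [hLHS]
  linarith [hparts]
end

section
/- Vanishing-at-endpoints obstruction for symmetric Riemann–Liouville derivatives (motivating the Caputo combined operator): if y : [a,b] → ℝ is such that both the left RL derivative {}_aD_x^α y and the right RL derivative {}_xD_b^α y (0 < α < 1) are continuous on the closed interval [a,b], and y is continuous on [a,b], then y(a) = 0 and y(b) = 0. -/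
open MeasureTheory Real Set Filter intervalIntegral

-- helper: the kernel integral value
lemma kernel_int (a x μ : ℝ) (hμ : 0 < μ) (hax : a ≤ x) :
    (∫ t in a..x, (x - t) ^ (μ - 1)) = (x - a) ^ μ / μ := by
  have h1 : (∫ t in a..x, (x - t) ^ (μ - 1))
      = ∫ u in x - x..x - a, u ^ (μ - 1) :=
    intervalIntegral.integral_comp_sub_left (fun u => u ^ (μ - 1)) x
  rw [h1, sub_self]
  rw [integral_rpow (Or.inl (by linarith : (-1:ℝ) < μ - 1))]
  rw [Real.zero_rpow (by linarith : μ - 1 + 1 ≠ 0)]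
  rw [sub_add_cancel]
  ring

lemma kernel_integrable (a x μ : ℝ) (hμ : 0 < μ) :
    IntervalIntegrable (fun t => (x - t) ^ (μ - 1)) volume a x := by
  have h := (intervalIntegrable_rpow' (a := 0) (b := x - a)
      (by linarith : (-1:ℝ) < μ - 1)).comp_sub_left x
  have h2 := h.symm
  simpa using h2

lemma left_forces_zero (a b α : ℝ) (hab : a < b)
    (hα : α ∈ Set.Ioo (0:ℝ) 1) (y : ℝ → ℝ)
    (hy : ContinuousOn y (Set.Icc a b)) (DL : ℝ → ℝ)
    (hDL : ∀ x ∈ Set.Icc a b, HasDerivAt (leftRLI a (1 - α) y) (DL x) x)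
    (hDLc : ContinuousOn DL (Set.Icc a b)) : y a = 0 := by
  obtain ⟨hα0, hα1⟩ := hα
  set μ : ℝ := 1 - α with hμdef
  have hμ0 : 0 < μ := by simp [hμdef]; linarith
  have hΓ : 0 < Real.Gamma μ := Real.Gamma_pos_of_pos hμ0
  obtain ⟨C, hC⟩ := IsCompact.exists_bound_of_continuousOn isCompact_Icc hDLc
  -- representation: the RL integral equals the integral of DL
  have hrep : ∀ x ∈ Set.Icc a b, leftRLI a μ y x = ∫ t in a..x, DL t := by
    intro x hx
    have hsub : Set.uIcc a x ⊆ Set.Icc a b := by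
      rw [Set.uIcc_of_le hx.1]
      exact Set.Icc_subset_Icc le_rfl hx.2
    have hint : IntervalIntegrable DL volume a x :=
      (hDLc.mono hsub).intervalIntegrable
    have := intervalIntegral.integral_eq_sub_of_hasDerivAt
      (fun t ht => hDL t (hsub ht)) hint
    have h0 : leftRLI a μ y a = 0 := by simp [leftRLI]
    rw [this, h0, sub_zero]
  -- bound on the RL integral
  have hbound : ∀ x ∈ Set.Icc a b, |leftRLI a μ y x| ≤ C * (x - a) := by
    intro x hx
    rw [hrep x hx]
    have := intervalIntegral.norm_integral_le_of_norm_le_const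
      (f := DL) (a := a) (b := x) (C := C) (fun t ht => by
        have ht' : t ∈ Set.Icc a b := by
          have := Set.uIoc_of_le hx.1 ▸ ht
          exact ⟨le_of_lt this.1, this.2.trans hx.2⟩
        exact hC t ht')
    calc |∫ t in a..x, DL t| ≤ C * |x - a| := this
    _ = C * (x - a) := by rw [abs_of_nonneg (by linarith [hx.1])]
  have hC0 : 0 ≤ C := le_trans (abs_nonneg _) (hC a ⟨le_rfl, hab.le⟩)
  -- main epsilon argument
  have key : ∀ ε > 0, |y a| ≤ ε := by
    intro ε hε
    -- continuity of y at a
    have hya : ContinuousWithinAt y (Set.Icc a b) a := hy a ⟨le_rfl, hab.le⟩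
    obtain ⟨δ1, hδ1, h1⟩ := Metric.continuousWithinAt_iff.mp hya (ε/2) (by positivity)
    -- continuity of s ↦ Γ C μ s^α at 0
    have hg : ContinuousAt (fun s : ℝ => Real.Gamma μ * C * μ * s ^ α) 0 := by
      exact (Real.continuousAt_rpow_const 0 α (Or.inr hα0.le)).const_mul _
    have hg0 : (fun s : ℝ => Real.Gamma μ * C * μ * s ^ α) 0 = 0 := by
      simp [Real.zero_rpow hα0.ne']
    obtain ⟨δ2, hδ2, h2⟩ := Metric.continuousAt_iff.mp hg (ε/2) (by positivity)
    set δ : ℝ := min (min δ1 δ2) (b - a) with hδdef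
    have hδ0 : 0 < δ := by
      apply lt_min (lt_min hδ1 hδ2); linarith
    set x : ℝ := a + δ/2 with hxdef
    have hax : a < x := by simp [hxdef]; linarith
    have hxb : x ≤ b := by
      have : δ ≤ b - a := min_le_right _ _
      simp [hxdef]; linarith
    have hxmem : x ∈ Set.Icc a b := ⟨hax.le, hxb⟩
    have hxa : x - a = δ/2 := by simp [hxdef]
    have hxδ1 : x - a < δ1 := by
      have : δ ≤ δ1 := (min_le_left _ _).trans (min_le_left _ _)
      rw [hxa]; linarith
    have hxδ2 : x - a < δ2 := by
      have : δ ≤ δ2 := (min_le_left _ _).trans (min_le_right _ _)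
      rw [hxa]; linarith
    set P : ℝ := (x - a) ^ μ / μ with hPdef
    have hxa0 : 0 < x - a := by linarith
    have hP0 : 0 < P := by
      apply div_pos (Real.rpow_pos_of_pos hxa0 μ) hμ0
    -- integrability facts
    have hker := kernel_integrable a x μ hμ0
    have hysub : ContinuousOn y (Set.uIcc a x) := hy.mono (by
      rw [Set.uIcc_of_le hax.le]; exact Set.Icc_subset_Icc le_rfl hxb)
    have hint1 : IntervalIntegrable (fun t => (x - t) ^ (μ - 1) * y t) volume a x :=
      hker.mul_continuousOn hysub
    have hint2 : IntervalIntegrable (fun t => (x - t) ^ (μ - 1) * (y t - y a)) volume a x :=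
      hker.mul_continuousOn (hysub.sub continuousOn_const)
    -- Gamma * RL integral equals the plain integral
    have hΓI : Real.Gamma μ * leftRLI a μ y x
        = ∫ t in a..x, (x - t) ^ (μ - 1) * y t := by
      rw [leftRLI]; field_simp
    -- split the integral
    have hsplit : (∫ t in a..x, (x - t) ^ (μ - 1) * y t)
        = (∫ t in a..x, (x - t) ^ (μ - 1) * (y t - y a)) + y a * P := by
      rw [hPdef, ← kernel_int a x μ hμ0 hax.le,
        ← intervalIntegral.integral_const_mul,
        ← intervalIntegral.integral_add hint2 (hker.const_mul (y a))]
      congr 1; funext t; ring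
    -- error bound
    have hE : |∫ t in a..x, (x - t) ^ (μ - 1) * (y t - y a)| ≤ ε/2 * P := by
      have hstep1 : |∫ t in a..x, (x - t) ^ (μ - 1) * (y t - y a)|
          ≤ ∫ t in a..x, |(x - t) ^ (μ - 1) * (y t - y a)| := by
        have h := intervalIntegral.norm_integral_le_integral_norm
            (f := fun t => (x - t) ^ (μ - 1) * (y t - y a)) (μ := volume) hax.le
        simp only [Real.norm_eq_abs] at h
        exact h
      have hstep2 : (∫ t in a..x, |(x - t) ^ (μ - 1) * (y t - y a)|)
          ≤ ∫ t in a..x, ε/2 * (x - t) ^ (μ - 1) := by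
        apply intervalIntegral.integral_mono_on hax.le hint2.abs
          (hker.const_mul (ε/2))
        intro t ht
        have htx : 0 ≤ x - t := by linarith [ht.2]
        have hk0 : 0 ≤ (x - t) ^ (μ - 1) := Real.rpow_nonneg htx _
        have htb : t ∈ Set.Icc a b := ⟨ht.1, ht.2.trans hxb⟩
        have hdist : dist t a < δ1 := by
          rw [Real.dist_eq, abs_of_nonneg (by linarith [ht.1])]
          linarith [ht.2, hxδ1]
        have hyt : |y t - y a| ≤ ε/2 := by
          have := h1 htb hdist
          rw [Real.dist_eq] at this
          exact this.le
        rw [abs_mul, abs_of_nonneg hk0]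
        calc (x - t) ^ (μ - 1) * |y t - y a| ≤ (x - t) ^ (μ - 1) * (ε/2) :=
              mul_le_mul_of_nonneg_left hyt hk0
          _ = ε/2 * (x - t) ^ (μ - 1) := by ring
      have hstep3 : (∫ t in a..x, ε/2 * (x - t) ^ (μ - 1)) = ε/2 * P := by
        rw [intervalIntegral.integral_const_mul, kernel_int a x μ hμ0 hax.le, hPdef]
      linarith [hstep1.trans (hstep2.trans_eq hstep3)]
    -- chain of inequalities
    have hyaP : y a * P = Real.Gamma μ * leftRLI a μ y x
        - ∫ t in a..x, (x - t) ^ (μ - 1) * (y t - y a) := by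
      rw [hΓI, hsplit]; ring
    have hchain : |y a| * P ≤ Real.Gamma μ * C * (x - a) + ε/2 * P := by
      have hb := hbound x hxmem
      have h6 : |y a| * P = |y a * P| := by
        rw [abs_mul, abs_of_pos hP0]
      rw [h6, hyaP]
      calc |Real.Gamma μ * leftRLI a μ y x
            - ∫ t in a..x, (x - t) ^ (μ - 1) * (y t - y a)|
          ≤ |Real.Gamma μ * leftRLI a μ y x|
            + |∫ t in a..x, (x - t) ^ (μ - 1) * (y t - y a)| := abs_sub _ _
        _ ≤ Real.Gamma μ * C * (x - a) + ε/2 * P := by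
            have : |Real.Gamma μ * leftRLI a μ y x|
                ≤ Real.Gamma μ * (C * (x - a)) := by
              rw [abs_mul, abs_of_pos hΓ]
              exact mul_le_mul_of_nonneg_left hb hΓ.le
            have h7 : Real.Gamma μ * (C * (x - a)) = Real.Gamma μ * C * (x - a) := by
              ring
            exact add_le_add (this.trans_eq h7) hE
    -- rewrite the linear term
    have hpow : (x - a) ^ α * (x - a) ^ μ = x - a := by
      rw [← Real.rpow_add hxa0]
      simp [hμdef]
    have hGC : Real.Gamma μ * C * (x - a)
        = (Real.Gamma μ * C * μ * (x - a) ^ α) * P := by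
      have h8 : (Real.Gamma μ * C * μ * (x - a) ^ α) * P
          = Real.Gamma μ * C * ((x - a) ^ α * (x - a) ^ μ) := by
        rw [hPdef]; field_simp
      rw [h8, hpow]
    have hgx : Real.Gamma μ * C * μ * (x - a) ^ α ≤ ε/2 := by
      have hd : dist (x - a) (0:ℝ) < δ2 := by
        rw [Real.dist_eq, sub_zero, abs_of_pos hxa0]; exact hxδ2
      have h9 := h2 hd
      simp only [Real.zero_rpow hα0.ne', mul_zero, Real.dist_eq, sub_zero] at h9
      exact (le_abs_self _).trans h9.le
    have hfinal : |y a| * P ≤ ε * P := by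
      calc |y a| * P ≤ Real.Gamma μ * C * (x - a) + ε/2 * P := hchain
        _ = (Real.Gamma μ * C * μ * (x - a) ^ α) * P + ε/2 * P := by rw [hGC]
        _ ≤ (ε/2) * P + ε/2 * P := by
            have := mul_le_mul_of_nonneg_right hgx hP0.le
            linarith
        _ = ε * P := by ring
    exact le_of_mul_le_mul_right hfinal hP0
  have : |y a| ≤ 0 := le_of_forall_pos_le_add (by intro ε hε; simpa using key ε hε)
  exact abs_eq_zero.mp (le_antisymm this (abs_nonneg _))

/-- if `y` is continuous on `[a,b]` and both its left and right
Riemann–Liouville derivatives of order `α ∈ (0,1)` exist with continuous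
(derivative) data on all of the closed interval `[a,b]`, then `y(a) = 0` and
`y(b) = 0`. -/
theorem rl_symmetric_forces_zero_boundary (a b α : ℝ) (hab : a < b)
    (hα : α ∈ Set.Ioo (0:ℝ) 1) (y : ℝ → ℝ)
    (hy : ContinuousOn y (Set.Icc a b))
    (DL DR : ℝ → ℝ)
    -- the left RL derivative of y exists on [a,b] with values DL, continuous on [a,b]
    (hDL : ∀ x ∈ Set.Icc a b, HasDerivAt (leftRLI a (1 - α) y) (DL x) x)
    (hDLc : ContinuousOn DL (Set.Icc a b))
    -- the right RL derivative of y exists on [a,b] with values -DR, continuous on [a,b]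
    (hDR : ∀ x ∈ Set.Icc a b, HasDerivAt (rightRLI b (1 - α) y) (-(DR x)) x)
    (hDRc : ContinuousOn DR (Set.Icc a b)) :
    y a = 0 ∧ y b = 0 := by
  constructor
  · exact left_forces_zero a b α hab hα y hy DL hDL hDLc
  · set c : ℝ := a + b with hc
    set z : ℝ → ℝ := fun t => y (c - t) with hzdef
    have hrefl : ∀ t ∈ Set.Icc a b, c - t ∈ Set.Icc a b := by
      intro t ht
      exact ⟨by simp [hc]; linarith [ht.2], by simp [hc]; linarith [ht.1]⟩
    have hz : ContinuousOn z (Set.Icc a b) :=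
      hy.comp ((continuous_const.sub continuous_id).continuousOn) hrefl
    have hEq : leftRLI a (1 - α) z = fun w => rightRLI b (1 - α) y (c - w) := by
      funext w
      rw [leftRLI, rightRLI]
      congr 1
      have hsub : ∀ t : ℝ, c - t - (c - w) = w - t := by intro t; ring
      calc (∫ t in a..w, (w - t) ^ ((1 - α) - 1) * z t)
          = ∫ t in a..w, (c - t - (c - w)) ^ ((1 - α) - 1) * y (c - t) := by
            congr 1; funext t; rw [hsub t]
        _ = ∫ u in c - w..c - a, (u - (c - w)) ^ ((1 - α) - 1) * y u :=
            intervalIntegral.integral_comp_sub_left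
              (fun u => (u - (c - w)) ^ ((1 - α) - 1) * y u) c
        _ = ∫ u in c - w..b, (u - (c - w)) ^ ((1 - α) - 1) * y u := by
            rw [show c - a = b by rw [hc]; ring]
    have hDz : ∀ x ∈ Set.Icc a b, HasDerivAt (leftRLI a (1 - α) z) (DR (c - x)) x := by
      intro x hx
      rw [hEq]
      have h1 : HasDerivAt (rightRLI b (1 - α) y) (-(DR (c - x))) (c - x) :=
        hDR _ (hrefl x hx)
      have h2 : HasDerivAt (fun w : ℝ => c - w) (-1) x := by
        simpa using (hasDerivAt_id x).const_sub c
      have h3 := h1.comp x h2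
      rw [mul_neg_one, neg_neg] at h3; exact h3
    have hDzc : ContinuousOn (fun x => DR (c - x)) (Set.Icc a b) :=
      hDRc.comp ((continuous_const.sub continuous_id).continuousOn) hrefl
    have hz0 := left_forces_zero a b α hab hα z hz _ hDz hDzc
    have : z a = y b := by rw [hzdef]; simp [hc]
    rw [← this]; exact hz0
end
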